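/- Let C be a pointed category with finite limits and cokernels, E pullback stable, and suppose the E-short five lemma holds. If f : A → B is in E with kernel pair (R, r₁, r₂) and q = coker(ker(f)) is in E with kernel pair (S, s₁, s₂), then the canonical comparison morphism h̄ : S → R induced by the comparison h : Coker(ker f) → B is an isomorphism; consequently, if f and q are regular epimorphisms, h is an isomorphism and f is a normal epimorphism. -/

import Mathlib

open CategoryTheory CategoryTheory.Limits ZeroObject

universe v u v' u'

namespace RelHom

variable {C : Type u} [Category.{v} C]

/-- `E` is stable under pullback. -/
def PullbackStable (E : MorphismProperty C) : Prop :=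
  ∀ ⦃P X Y Z : C⦄ (fst : P ⟶ X) (snd : P ⟶ Y) (f : X ⟶ Z) (g : Y ⟶ Z),
    IsPullback fst snd f g → E g → E fst

/-- `E` contains all isomorphisms. -/
def ContainsIsos (E : MorphismProperty C) : Prop :=
  ∀ ⦃X Y : C⦄ (f : X ⟶ Y), IsIso f → E f

/-- `E` is closed under composition. -/
def CompClosed (E : MorphismProperty C) : Prop :=
  ∀ ⦃X Y Z : C⦄ (f : X ⟶ Y) (g : Y ⟶ Z), E f → E g → E (f ≫ g)

/-- If `f ∈ E` and `f ≫ g ∈ E` then `g ∈ E`. -/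
def RightCancel (E : MorphismProperty C) : Prop :=
  ∀ ⦃X Y Z : C⦄ (f : X ⟶ Y) (g : Y ⟶ Z), E f → E (f ≫ g) → E g

variable [HasZeroMorphisms C]

/-- The `E`-short five lemma. -/
def ShortFive (E : MorphismProperty C) : Prop :=
  ∀ ⦃K A A' B : C⦄ (k : K ⟶ A) (k' : K ⟶ A') (f : A ⟶ B) (f' : A' ⟶ B) (w : A ⟶ A')
    (hk : k ≫ f = 0) (hk' : k' ≫ f' = 0),
    IsLimit (KernelFork.ofι k hk) → IsLimit (KernelFork.ofι k' hk') →
    E f → E f' → w ≫ f' = f → k ≫ w = k' → IsIso w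

/-- Every morphism in `E` is a normal epimorphism. -/
def AllNormalEpi (E : MorphismProperty C) : Prop :=
  ∀ ⦃X Y : C⦄ (f : X ⟶ Y), E f → Nonempty (NormalEpi f)

/-- Condition (f): (mono)∘(E) composites admit (E, mono)-factorizations. -/
def MonoFactor (E : MorphismProperty C) : Prop :=
  ∀ ⦃X Y Z : C⦄ (e : X ⟶ Y) (m : Y ⟶ Z), E e → Mono m →
    ∃ (W : C) (e' : X ⟶ W) (m' : W ⟶ Z), E e' ∧ Mono m' ∧ e' ≫ m' = e ≫ m

/-- Condition (g): the kernel-ladder condition. -/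
def KernelLadder (E : MorphismProperty C) : Prop :=
  ∀ ⦃K K' A A' B : C⦄ (k : K ⟶ A) (k' : K' ⟶ A') (f : A ⟶ B) (f' : A' ⟶ B)
    (u : K ⟶ K') (w : A ⟶ A') (hk : k ≫ f = 0) (hk' : k' ≫ f' = 0),
    IsLimit (KernelFork.ofι k hk) → IsLimit (KernelFork.ofι k' hk') →
    E f → E f' → E u → w ≫ f' = f → k ≫ w = u ≫ k' → E w

/-- `(C, E)` is a relative weakly homological category: conditions (a)–(e). -/
structure WeaklyHomological (E : MorphismProperty C) : Prop where
  contains_isos : ContainsIsos E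
  stable : PullbackStable E
  normal_epi : AllNormalEpi E
  short_five : ShortFive E
  comp_closed : CompClosed E
  right_cancel : RightCancel E

/-- `(C, E)` is a relative homological category: conditions (a)–(g). -/
structure Homological (E : MorphismProperty C) extends WeaklyHomological E : Prop where
  mono_factor : MonoFactor E
  ladder : KernelLadder E

/-- A composable pair is `E`-exact at the middle object if the incoming morphism
factors as a morphism in `E` followed by the kernel of the outgoing morphism. -/
def EExactAt (E : MorphismProperty C) ⦃X Y Z : C⦄ (f : X ⟶ Y) (g : Y ⟶ Z) : Prop :=
  ∃ (W : C) (e : X ⟶ W) (m : W ⟶ Y) (hm : m ≫ g = 0),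
    E e ∧ Nonempty (IsLimit (KernelFork.ofι m hm)) ∧ e ≫ m = f

/-- `0 ⟶ X ⟶ Y ⟶ Z ⟶ 0` is an `E`-exact (short exact) sequence:
`f` is the kernel of `g` and `g ∈ E`. -/
def ShortEExact (E : MorphismProperty C) ⦃X Y Z : C⦄ (f : X ⟶ Y) (g : Y ⟶ Z)
    (h : f ≫ g = 0) : Prop :=
  Nonempty (IsLimit (KernelFork.ofι f h)) ∧ E g

/-- The class of split epimorphisms. -/
def SplitEpis : MorphismProperty C := fun _ _ f => IsSplitEpi f

/-- The class of regular epimorphisms. -/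
def RegEpis : MorphismProperty C := fun _ _ f => Nonempty (RegularEpi f)

section Aux

variable {C : Type u} [Category.{v} C] [HasZeroMorphisms C] [HasFiniteLimits C]

/-- If `k` is a kernel of `g`, then the induced map into the kernel pair of `g`
is a kernel of the first projection. -/
noncomputable def kerFstOfKer {K A B : C} (g : A ⟶ B) (k : K ⟶ A) (hk : k ≫ g = 0)
    (hlim : IsLimit (KernelFork.ofι k hk)) :
    IsLimit (KernelFork.ofι (f := pullback.fst g g)
      (pullback.lift (0 : K ⟶ A) k (by simp [hk]) : K ⟶ pullback g g)
      (by simp [pullback.lift_fst, pullback.lift_snd, pullback.lift_fst_assoc, pullback.lift_snd_assoc])) := by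
  have hmono : Mono k := mono_of_isLimit_fork hlim
  have hℓ : (pullback.lift (0 : K ⟶ A) k (by simp [hk]) : K ⟶ pullback g g) ≫
      pullback.snd g g = k := by simp [pullback.lift_fst, pullback.lift_snd, pullback.lift_fst_assoc, pullback.lift_snd_assoc]
  have hℓmono : Mono (pullback.lift (0 : K ⟶ A) k (by simp [hk]) : K ⟶ pullback g g) := by
    have : Mono ((pullback.lift (0 : K ⟶ A) k (by simp [hk]) : K ⟶ pullback g g) ≫
        pullback.snd g g) := by rw [hℓ]; infer_instance
    exact mono_of_mono _ (pullback.snd g g)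
  refine KernelFork.IsLimit.ofι' _ _ (fun {T} t ht => ?_)
  have hcond : (t ≫ pullback.snd g g) ≫ g = 0 := by
    rw [Category.assoc, ← pullback.condition, ← Category.assoc, ht, zero_comp]
  obtain ⟨l, hl⟩ := KernelFork.IsLimit.lift' hlim (t ≫ pullback.snd g g) hcond
  simp only [Fork.ι_ofι] at hl
  refine ⟨l, pullback.hom_ext ?_ ?_⟩
  · simp [ht, pullback.lift_fst, pullback.lift_snd, pullback.lift_fst_assoc, pullback.lift_snd_assoc]
  · simpa [pullback.lift_fst, pullback.lift_snd, pullback.lift_fst_assoc, pullback.lift_snd_assoc] using hl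

end Aux

theorem statement17 [HasZeroObject C] [HasFiniteLimits C] [HasCokernels C]
    (E : MorphismProperty C) (hiso : ContainsIsos E) (hstb : PullbackStable E)
    (h5 : ShortFive E) {A B : C} (f : A ⟶ B) (hf : E f)
    (hq : E (cokernel.π (kernel.ι f))) :
    IsIso (pullback.map (cokernel.π (kernel.ι f)) (cokernel.π (kernel.ι f)) f f
      (𝟙 A) (𝟙 A) (cokernel.desc (kernel.ι f) f (kernel.condition f))
      (by simp) (by simp)) ∧
    (Nonempty (RegularEpi f) → Nonempty (RegularEpi (cokernel.π (kernel.ι f))) →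
      (IsIso (cokernel.desc (kernel.ι f) f (kernel.condition f)) ∧
        Nonempty (NormalEpi f))) := by
  let q := cokernel.π (kernel.ι f)
  let h := cokernel.desc (kernel.ι f) f (kernel.condition f)
  have hqh : q ≫ h = f := cokernel.π_desc _ _ _
  have hkq : kernel.ι f ≫ q = 0 := cokernel.condition _
  have hlimq : IsLimit (KernelFork.ofι (kernel.ι f) hkq) := by
    refine KernelFork.IsLimit.ofι' _ _ (fun {T} t ht => ?_)
    have ht' : t ≫ f = 0 := by rw [← hqh, ← Category.assoc, ht, zero_comp]
    exact ⟨kernel.lift f t ht', kernel.lift_ι _ _ _⟩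
  have hlimf : IsLimit (KernelFork.ofι (kernel.ι f) (kernel.condition f)) := kernelIsKernel f
  have limS := kerFstOfKer q (kernel.ι f) hkq hlimq
  have limR := kerFstOfKer f (kernel.ι f) (kernel.condition f) hlimf
  have hEfstq : E (pullback.fst q q) := hstb _ _ _ _ (IsPullback.of_hasPullback q q) hq
  have hEfstf : E (pullback.fst f f) := hstb _ _ _ _ (IsPullback.of_hasPullback f f) hf
  have hwiso : IsIso (pullback.map q q f f (𝟙 A) (𝟙 A) h (by simp [hqh]) (by simp [hqh])) := by
    refine h5 _ _ _ _ _ _ _ limS limR hEfstq hEfstf ?_ ?_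
    · simp [pullback.lift_fst, pullback.lift_snd, pullback.lift_fst_assoc, pullback.lift_snd_assoc]
    · apply pullback.hom_ext <;> simp [pullback.lift_fst, pullback.lift_snd, pullback.lift_fst_assoc, pullback.lift_snd_assoc]
  refine ⟨hwiso, fun hrf hrq => ?_⟩
  haveI := RegularEpi.epi f hrf.some
  haveI := hrq.some
  have kp : IsKernelPair f (pullback.fst f f) (pullback.snd f f) :=
    IsPullback.of_hasPullback f f
  have cf := kp.toCoequalizer hrf.some
  have hq2 : pullback.fst f f ≫ q = pullback.snd f f ≫ q := by
    rw [← cancel_epi (pullback.map q q f f (𝟙 A) (𝟙 A) h (by simp [hqh]) (by simp [hqh]))]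
    rw [← Category.assoc, ← Category.assoc]
    simp [pullback.condition, pullback.lift_fst, pullback.lift_snd, pullback.lift_fst_assoc, pullback.lift_snd_assoc]
  obtain ⟨g, hg⟩ := Cofork.IsColimit.desc' cf q hq2
  simp only [Cofork.π_ofπ] at hg
  have hhg : h ≫ g = 𝟙 _ := by
    rw [← cancel_epi q, ← Category.assoc, hqh, hg, Category.comp_id]
  have hgh : g ≫ h = 𝟙 B := by
    rw [← cancel_epi f, ← Category.assoc, hg, hqh, Category.comp_id]
  have hhiso : IsIso h := ⟨g, hhg, hgh⟩
  refine ⟨hhiso, ⟨⟨kernel f, kernel.ι f, kernel.condition f, ?_⟩⟩⟩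
  haveI : IsIso h := hhiso
  refine CokernelCofork.IsColimit.ofπ' _ _ (fun {T} s hs => ?_)
  refine ⟨inv h ≫ cokernel.desc (kernel.ι f) s hs, ?_⟩
  have hfi : f ≫ inv h = q := by rw [IsIso.comp_inv_eq]; exact hqh.symm
  rw [← Category.assoc, hfi]
  exact cokernel.π_desc _ _ _

end RelHom
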